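/- Let X be a reflexive real Banach space and T a compact linear operator from X to X with operator norm 1 such that [T] = inf{‖Tz‖ : z ∈ S_X} > 0. Let x be a unit vector in M_T that is a smooth point of X. Then there exists ε_x ∈ [0,1) such that for every y ∈ X, x ⊥_B y implies Ty ⊥_B^{ε_x} Tx (i.e., T is ε_x-CLAOR at x). -/

import Mathlib

/-- Birkhoff–James orthogonality: `x ⊥_B y` iff `‖x + λ • y‖ ≥ ‖x‖` for every real `λ`. -/
def BJOrth {E : Type*} [NormedAddCommGroup E] [NormedSpace ℝ E] (x y : E) : Prop :=
  ∀ lam : ℝ, ‖x‖ ≤ ‖x + lam • y‖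

/-- `x` is a left-symmetric point: `x ⊥_B y` implies `y ⊥_B x` for all `y`. -/
def LeftSymmetricPt {E : Type*} [NormedAddCommGroup E] [NormedSpace ℝ E] (x : E) : Prop :=
  ∀ y : E, BJOrth x y → BJOrth y x

/-- `x` is a right-symmetric point: `y ⊥_B x` implies `x ⊥_B y` for all `y`. -/
def RightSymmetricPt {E : Type*} [NormedAddCommGroup E] [NormedSpace ℝ E] (x : E) : Prop :=
  ∀ y : E, BJOrth y x → BJOrth x y

/-- A nonzero `x` is a smooth point if there is exactly one norm-one continuous linear
functional `f` with `f x = ‖x‖`. -/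
def SmoothPoint {E : Type*} [NormedAddCommGroup E] [NormedSpace ℝ E] (x : E) : Prop :=
  ∃! f : E →L[ℝ] ℝ, ‖f‖ = 1 ∧ f x = ‖x‖

/-- A normed space is reflexive if the canonical embedding into the double dual is onto. -/
def ReflexiveSpace (E : Type*) [NormedAddCommGroup E] [NormedSpace ℝ E] : Prop :=
  Function.Surjective (NormedSpace.inclusionInDoubleDual ℝ E)

/-- `T` (a compact operator) is a right-symmetric point of the space of compact operators
(with the operator norm): `A ⊥_B T` implies `T ⊥_B A` for every compact operator `A`. -/
def RightSymmetricCompactOp {X Y : Type*} [NormedAddCommGroup X] [NormedSpace ℝ X]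
    [NormedAddCommGroup Y] [NormedSpace ℝ Y] (T : X →L[ℝ] Y) : Prop :=
  ∀ A : X →L[ℝ] Y, IsCompactOperator A → BJOrth A T → BJOrth T A

/-- `T` is left orthogonality preserving at `x`: `x ⊥_B y` implies `T x ⊥_B T y`. -/
def LeftOPAt {X Y : Type*} [NormedAddCommGroup X] [NormedSpace ℝ X]
    [NormedAddCommGroup Y] [NormedSpace ℝ Y] (T : X →L[ℝ] Y) (x : X) : Prop :=
  ∀ y : X, BJOrth x y → BJOrth (T x) (T y)

/-- Approximate Birkhoff–James orthogonality in the sense of Dragomir–Chmieliński: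
`x ⊥_D^ε y` iff `‖x + λ • y‖ ≥ √(1 - ε²) * ‖x‖` for every real `λ`. -/
def ApproxOrthD {E : Type*} [NormedAddCommGroup E] [NormedSpace ℝ E]
    (ε : ℝ) (x y : E) : Prop :=
  ∀ lam : ℝ, Real.sqrt (1 - ε ^ 2) * ‖x‖ ≤ ‖x + lam • y‖

/-- Approximate Birkhoff–James orthogonality in the sense of Chmieliński:
`x ⊥_B^ε y` iff `‖x + λ • y‖² ≥ ‖x‖² - 2ε‖x‖‖λ • y‖` for every real `λ`. -/
def ApproxOrthC {E : Type*} [NormedAddCommGroup E] [NormedSpace ℝ E]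
    (ε : ℝ) (x y : E) : Prop :=
  ∀ lam : ℝ, ‖x‖ ^ 2 - 2 * ε * ‖x‖ * ‖lam • y‖ ≤ ‖x + lam • y‖ ^ 2

section Helpers

variable {E : Type*} [NormedAddCommGroup E] [NormedSpace ℝ E]

lemma approx_of_functional {ε : ℝ} (hε : 0 ≤ ε) {u v : E}
    (g : E →L[ℝ] ℝ) (hg1 : ‖g‖ ≤ 1) (hgu : g u = ‖u‖) (hgv : |g v| ≤ ε * ‖v‖) :
    ApproxOrthC ε u v := by
  intro lam
  have key : ‖u‖ - ε * ‖lam • v‖ ≤ ‖u + lam • v‖ := by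
    have h1 : g (u + lam • v) ≤ ‖u + lam • v‖ := by
      calc g (u + lam • v) ≤ |g (u + lam • v)| := le_abs_self _
        _ ≤ ‖g‖ * ‖u + lam • v‖ := g.le_opNorm _
        _ ≤ 1 * ‖u + lam • v‖ := by
            exact mul_le_mul_of_nonneg_right hg1 (norm_nonneg _)
        _ = ‖u + lam • v‖ := one_mul _
    have h2 : g (u + lam • v) = ‖u‖ + lam * g v := by
      simp [map_add, hgu, map_smul, smul_eq_mul]
    have h3 : -(ε * ‖lam • v‖) ≤ lam * g v := by
      have : |lam * g v| ≤ ε * ‖lam • v‖ := by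
        rw [abs_mul, norm_smul, Real.norm_eq_abs]
        calc |lam| * |g v| ≤ |lam| * (ε * ‖v‖) :=
              mul_le_mul_of_nonneg_left hgv (abs_nonneg _)
          _ = ε * (|lam| * ‖v‖) := by ring
      linarith [neg_abs_le (lam * g v)]
    linarith
  have hN : (0:ℝ) ≤ ‖u + lam • v‖ := norm_nonneg _
  have ht : (0:ℝ) ≤ ‖lam • v‖ := norm_nonneg _
  have hu : (0:ℝ) ≤ ‖u‖ := norm_nonneg _
  rcases le_or_gt (ε * ‖lam • v‖) ‖u‖ with h | h
  · have h0 : (0:ℝ) ≤ ‖u‖ - ε * ‖lam • v‖ := by linarith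
    calc ‖u‖ ^ 2 - 2 * ε * ‖u‖ * ‖lam • v‖ ≤ (‖u‖ - ε * ‖lam • v‖) ^ 2 := by
          nlinarith [sq_nonneg (ε * ‖lam • v‖)]
      _ ≤ ‖u + lam • v‖ ^ 2 := pow_le_pow_left₀ h0 key 2
  · nlinarith [mul_nonneg hε ht]

lemma approxOrthC_smul_left {ε a : ℝ} {u v : E} (h : ApproxOrthC ε u v) :
    ApproxOrthC ε (a • u) v := by
  rcases eq_or_ne a 0 with rfl | ha
  · intro lam; simp
  · intro lam
    have h' := h (lam / a)
    have e1 : a • u + lam • v = a • (u + (lam / a) • v) := by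
      rw [smul_add, smul_smul, mul_div_cancel₀ _ ha]
    have e2 : ‖a • u + lam • v‖ = |a| * ‖u + (lam / a) • v‖ := by
      rw [e1, norm_smul, Real.norm_eq_abs]
    have e3 : ‖a • u‖ = |a| * ‖u‖ := by rw [norm_smul, Real.norm_eq_abs]
    have e4 : ‖lam • v‖ = |a| * ‖(lam / a) • v‖ := by
      rw [norm_smul, norm_smul, Real.norm_eq_abs, Real.norm_eq_abs, ← mul_assoc,
        ← abs_mul, mul_div_cancel₀ _ ha]
    rw [e2, e3, e4]
    nlinarith [abs_nonneg a, sq_nonneg (|a|)]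

lemma exists_support_zero {x y : E} (hx : x ≠ 0) (hxy : BJOrth x y) :
    ∃ φ : E →L[ℝ] ℝ, ‖φ‖ ≤ 1 ∧ φ x = ‖x‖ ∧ φ y = 0 := by
  set S : Submodule ℝ E := Submodule.span ℝ {y} with hS
  haveI : FiniteDimensional ℝ S := by
    rw [hS]; infer_instance
  haveI hSc : IsClosed (S : Set E) := Submodule.closed_of_finiteDimensional S
  -- quotient map as a continuous linear map
  let q : E →L[ℝ] (E ⧸ S) :=
    LinearMap.mkContinuous S.mkQ 1 (fun m => by
      simpa using Submodule.Quotient.norm_mk_le S m)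
  have hqnorm : ∀ m : E, ‖q m‖ ≤ ‖m‖ := fun m => by
    exact Submodule.Quotient.norm_mk_le S m
  have hqx : ‖q x‖ = ‖x‖ := by
    refine le_antisymm (hqnorm x) ?_
    by_contra hlt
    push_neg at hlt
    obtain ⟨m, hm, hmlt⟩ := QuotientAddGroup.norm_lt_iff.1 hlt
    have h' : (Submodule.Quotient.mk m : E ⧸ S) = Submodule.Quotient.mk x := hm
    have hmem : x - m ∈ S := (Submodule.Quotient.eq S).1 h'.symm
    obtain ⟨a, ha⟩ := Submodule.mem_span_singleton.1 hmem
    have hmx : m = x + (-a) • y := by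
      have : x - m = a • y := ha.symm
      rw [neg_smul, ← this]; abel
    have := hxy (-a)
    rw [← hmx] at this
    linarith
  have hqxne : q x ≠ 0 := by
    intro h0
    apply hx
    have : ‖x‖ = 0 := by rw [← hqx, h0, norm_zero]
    exact norm_eq_zero.1 this
  obtain ⟨g, hg1, hg2⟩ := exists_dual_vector ℝ (q x) (norm_ne_zero_iff.2 hqxne)
  refine ⟨g.comp q, ?_, ?_, ?_⟩
  · calc ‖g.comp q‖ ≤ ‖g‖ * ‖q‖ := g.opNorm_comp_le q
      _ ≤ 1 * 1 := by
          refine mul_le_mul (le_of_eq hg1) ?_ (norm_nonneg q) zero_le_one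
          exact LinearMap.mkContinuous_norm_le _ zero_le_one _
      _ = 1 := one_mul 1
  · have : g (q x) = ‖q x‖ := by exact_mod_cast hg2
    simp only [ContinuousLinearMap.comp_apply, this, hqx]
  · have hy0 : q y = 0 := by
      have : y ∈ S := Submodule.mem_span_singleton_self y
      simpa [q, LinearMap.mkContinuous_apply] using (Submodule.Quotient.mk_eq_zero S).2 this
    simp [ContinuousLinearMap.comp_apply, hy0]

lemma approxOrthC_zero_left {ε : ℝ} (v : E) : ApproxOrthC ε (0 : E) v := by
  intro lam; simp

lemma bjorth_smul_right {x y : E} (h : BJOrth x y) (a : ℝ) : BJOrth x (a • y) := by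
  intro lam
  rw [smul_smul]
  exact h (lam * a)

lemma findim_of_compact_below {X : Type*} [NormedAddCommGroup X] [NormedSpace ℝ X]
    [CompleteSpace X] {T : X →L[ℝ] X} (hTc : IsCompactOperator T) {c : ℝ} (hc : 0 < c)
    (hlow : ∀ z, c * ‖z‖ ≤ ‖T z‖) : FiniteDimensional ℝ X := by
  have hA : AntilipschitzWith (⟨c, hc.le⟩ : NNReal)⁻¹ T := by
    apply T.antilipschitz_of_bound
    intro z
    have := hlow z
    show ‖z‖ ≤ c⁻¹ * ‖T z‖
    rw [le_inv_mul_iff₀ (by exact_mod_cast hc)]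
    exact_mod_cast this
  have hCE : Topology.IsClosedEmbedding T := hA.isClosedEmbedding T.uniformContinuous
  obtain ⟨K, hK, hKnhds⟩ := hTc
  have hpre : IsCompact (T ⁻¹' K) := hCE.isCompact_preimage hK
  obtain ⟨r, hr, hball⟩ := Metric.mem_nhds_iff.1 hKnhds
  have hsub : Metric.closedBall (0 : X) (r / 2) ⊆ T ⁻¹' K := by
    intro z hz
    apply hball
    rw [Metric.mem_closedBall] at hz
    rw [Metric.mem_ball]
    linarith
  have hcb : IsCompact (Metric.closedBall (0 : X) (r / 2)) :=
    hpre.of_isClosed_subset Metric.isClosed_closedBall hsub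
  exact FiniteDimensional.of_isCompact_closedBall₀ ℝ (by linarith) hcb


end Helpers

set_option maxHeartbeats 2000000 in
/-- Let `X` be a reflexive Banach space and `T : X → X` a norm-one compact
operator with `[T] = inf {‖T z‖ : ‖z‖ = 1} > 0`. If `x` is a unit vector in `M_T` that is a
smooth point, then there is `ε ∈ [0,1)` such that `x ⊥_B y` implies `T y ⊥_B^ε T x` for all
`y` (i.e., `T` is `ε`-CLAOR at `x`). -/
theorem CLAOR_at_smooth_point {X : Type*}
    [NormedAddCommGroup X] [NormedSpace ℝ X] [CompleteSpace X]
    (hX : ReflexiveSpace X)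
    (T : X →L[ℝ] X) (hTc : IsCompactOperator T) (hT : ‖T‖ = 1)
    (hbelow : 0 < sInf {r : ℝ | ∃ z : X, ‖z‖ = 1 ∧ ‖T z‖ = r})
    (x : X) (hx : ‖x‖ = 1) (hMT : ‖T x‖ = ‖T‖) (hsm : SmoothPoint x) :
    ∃ ε : ℝ, 0 ≤ ε ∧ ε < 1 ∧ ∀ y : X, BJOrth x y → ApproxOrthC ε (T y) (T x) := by
  classical
  have hSbdd : BddBelow {r : ℝ | ∃ z : X, ‖z‖ = 1 ∧ ‖T z‖ = r} := by
    refine ⟨0, ?_⟩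
    rintro r ⟨z, -, rfl⟩
    exact norm_nonneg _
  set c : ℝ := sInf {r : ℝ | ∃ z : X, ‖z‖ = 1 ∧ ‖T z‖ = r} with hc
  have hcpos : 0 < c := hbelow
  have hlow : ∀ z : X, c * ‖z‖ ≤ ‖T z‖ := by
    intro z
    rcases eq_or_ne z 0 with rfl | hz
    · simp
    · have hzpos : 0 < ‖z‖ := norm_pos_iff.2 hz
      have hu : ‖(‖z‖⁻¹ • z)‖ = 1 := by
        rw [norm_smul, norm_inv, norm_norm, inv_mul_cancel₀ hzpos.ne']
      have h1 : c ≤ ‖T (‖z‖⁻¹ • z)‖ := csInf_le hSbdd ⟨_, hu, rfl⟩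
      have h2 : ‖T (‖z‖⁻¹ • z)‖ = ‖z‖⁻¹ * ‖T z‖ := by
        rw [map_smul, norm_smul, norm_inv, norm_norm]
      rw [h2] at h1
      calc c * ‖z‖ ≤ (‖z‖⁻¹ * ‖T z‖) * ‖z‖ :=
            mul_le_mul_of_nonneg_right h1 hzpos.le
        _ = ‖T z‖ := by field_simp
  haveI : FiniteDimensional ℝ X := findim_of_compact_below hTc hcpos hlow
  by_contra hcon
  push_neg at hcon
  have hone : ∀ n : ℕ, (0:ℝ) < 1/(n+1) ∧ (1/(n+1):ℝ) ≤ 1 := by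
    intro n
    have h1 : (1:ℝ) ≤ (n:ℝ) + 1 := le_add_of_nonneg_left (Nat.cast_nonneg n)
    constructor
    · positivity
    · rw [div_le_one (by linarith)]
      exact h1
  choose y0 hy0orth hy0bad using fun n : ℕ =>
    hcon (1 - 1/(n+1)) (by linarith [(hone n).2]) (by linarith [(hone n).1])
  have hy0ne : ∀ n, y0 n ≠ 0 := by
    intro n h0
    apply hy0bad n
    rw [h0, map_zero]
    exact approxOrthC_zero_left (T x)
  set y : ℕ → X := fun n => ‖y0 n‖⁻¹ • y0 n with hy
  have hy0pos : ∀ n, 0 < ‖y0 n‖ := fun n => norm_pos_iff.2 (hy0ne n)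
  have hyunit : ∀ n, ‖y n‖ = 1 := by
    intro n
    rw [hy, norm_smul, norm_inv, norm_norm, inv_mul_cancel₀ (hy0pos n).ne']
  have hyorth : ∀ n, BJOrth x (y n) := fun n => bjorth_smul_right (hy0orth n) _
  have hybad : ∀ n : ℕ, ¬ ApproxOrthC (1 - 1/((n:ℝ)+1)) (T (y n)) (T x) := by
    intro n hgood
    apply hy0bad n
    have h1 : ApproxOrthC (1 - 1/((n:ℝ)+1)) (‖y0 n‖ • T (y n)) (T x) :=
      approxOrthC_smul_left hgood
    have h2 : ‖y0 n‖ • T (y n) = T (y0 n) := by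
      rw [hy]
      simp only [map_smul]
      rw [smul_inv_smul₀ (hy0pos n).ne']
    rwa [h2] at h1
  have hTyne : ∀ n, T (y n) ≠ 0 := by
    intro n h0
    have := hlow (y n)
    rw [h0, norm_zero, hyunit n, mul_one] at this
    linarith
  choose h hh1 hh2 using fun n => exists_dual_vector ℝ (T (y n)) (norm_ne_zero_iff.2 (hTyne n))
  have hTx1 : ‖T x‖ = 1 := by rw [hMT, hT]
  have hkey : ∀ n : ℕ, (1 - 1/((n:ℝ)+1) : ℝ) < |h n (T x)| := by
    intro n
    by_contra hle
    push_neg at hle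
    apply hybad n
    refine approx_of_functional (by linarith [(hone n).2]) (h n) (le_of_eq (hh1 n))
      (by exact_mod_cast hh2 n) ?_
    rw [hTx1, mul_one]
    exact hle
  have hKc : IsCompact ((Metric.sphere (0:X) 1) ×ˢ (Metric.closedBall (0 : X →L[ℝ] ℝ) 1)) :=
    (isCompact_sphere 0 1).prod (isCompact_closedBall 0 1)
  have hmemK : ∀ n, (y n, h n) ∈ (Metric.sphere (0:X) 1) ×ˢ
      (Metric.closedBall (0 : X →L[ℝ] ℝ) 1) := by
    intro n
    exact ⟨mem_sphere_zero_iff_norm.2 (hyunit n), mem_closedBall_zero_iff.2 (le_of_eq (hh1 n))⟩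
  obtain ⟨⟨z, hinf⟩, hzmem, ψ, hψmono, hψconv⟩ := hKc.tendsto_subseq hmemK
  have hyconv : Filter.Tendsto (fun n => y (ψ n)) Filter.atTop (nhds z) :=
    (continuous_fst.tendsto _).comp hψconv
  have hhconv : Filter.Tendsto (fun n => h (ψ n)) Filter.atTop (nhds hinf) :=
    (continuous_snd.tendsto _).comp hψconv
  have hz1 : ‖z‖ = 1 := mem_sphere_zero_iff_norm.1 hzmem.1
  have hhle : ‖hinf‖ ≤ 1 := mem_closedBall_zero_iff.1 hzmem.2
  have hxz : BJOrth x z := by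
    intro lam
    have hcont : Filter.Tendsto (fun n => ‖x + lam • y (ψ n)‖) Filter.atTop
        (nhds ‖x + lam • z‖) := (((hyconv.const_smul lam).const_add x).norm)
    exact ge_of_tendsto hcont (Filter.Eventually.of_forall fun n => hyorth (ψ n) lam)
  have hTyconv : Filter.Tendsto (fun n => T (y (ψ n))) Filter.atTop (nhds (T z)) :=
    (T.continuous.tendsto z).comp hyconv
  have happly : Filter.Tendsto (fun n => h (ψ n) (T (y (ψ n)))) Filter.atTop
      (nhds (hinf (T z))) := by
    have hp : Filter.Tendsto (fun n => (h (ψ n), T (y (ψ n)))) Filter.atTop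
        (nhds (hinf, T z)) := hhconv.prodMk_nhds hTyconv
    exact (isBoundedBilinearMap_apply.continuous.tendsto (hinf, T z)).comp hp
  have hhTz : hinf (T z) = ‖T z‖ := by
    have heq : (fun n => h (ψ n) (T (y (ψ n)))) = fun n => ‖T (y (ψ n))‖ :=
      funext fun n => by exact_mod_cast hh2 (ψ n)
    rw [heq] at happly
    exact tendsto_nhds_unique happly hTyconv.norm
  have hTzpos : 0 < ‖T z‖ := by
    have := hlow z
    rw [hz1, mul_one] at this
    linarith
  have hevalTx : Filter.Tendsto (fun n => h (ψ n) (T x)) Filter.atTop (nhds (hinf (T x))) := by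
    have hp : Filter.Tendsto (fun n => (h (ψ n), T x)) Filter.atTop (nhds (hinf, T x)) :=
      hhconv.prodMk_nhds tendsto_const_nhds
    exact (isBoundedBilinearMap_apply.continuous.tendsto (hinf, T x)).comp hp
  have heps1 : Filter.Tendsto (fun n : ℕ => (1 - 1/(ψ n + 1) : ℝ)) Filter.atTop (nhds 1) := by
    have hbase : Filter.Tendsto (fun n : ℕ => (1 - 1/(n + 1) : ℝ)) Filter.atTop (nhds 1) := by
      simpa using tendsto_one_div_add_atTop_nhds_zero_nat.const_sub (1:ℝ)
    exact hbase.comp hψmono.tendsto_atTop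
  have hge1 : (1:ℝ) ≤ |hinf (T x)| :=
    le_of_tendsto_of_tendsto' heps1 hevalTx.abs (fun n => (hkey (ψ n)).le)
  have hle1 : |hinf (T x)| ≤ 1 := by
    calc |hinf (T x)| ≤ ‖hinf‖ * ‖T x‖ := hinf.le_opNorm (T x)
      _ ≤ 1 := by rw [hTx1, mul_one]; exact hhle
  have habs1 : |hinf (T x)| = 1 := le_antisymm hle1 hge1
  set g : X →L[ℝ] ℝ := (hinf (T x)) • hinf with hg
  have hgTx : g (T x) = 1 := by
    have : hinf (T x) * hinf (T x) = |hinf (T x)| * |hinf (T x)| :=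
      (abs_mul_abs_self _).symm
    rw [hg]
    simp only [ContinuousLinearMap.smul_apply, smul_eq_mul]
    rw [this, habs1, mul_one]
  have hgle : ‖g‖ ≤ 1 := by
    calc ‖g‖ ≤ ‖hinf (T x)‖ * ‖hinf‖ := ContinuousLinearMap.opNorm_smul_le _ _
      _ = |hinf (T x)| * ‖hinf‖ := by rw [Real.norm_eq_abs]
      _ = ‖hinf‖ := by rw [habs1, one_mul]
      _ ≤ 1 := hhle
  set f1 : X →L[ℝ] ℝ := g.comp T with hf1
  have hf1x : f1 x = ‖x‖ := by
    rw [hf1]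
    simp only [ContinuousLinearMap.comp_apply]
    rw [hgTx, hx]
  have hf1norm : ‖f1‖ = 1 := by
    refine le_antisymm ?_ ?_
    · calc ‖f1‖ ≤ ‖g‖ * ‖T‖ := g.opNorm_comp_le T
        _ ≤ 1 := by rw [hT, mul_one]; exact hgle
    · have h1 : |f1 x| ≤ ‖f1‖ * ‖x‖ := f1.le_opNorm x
      rw [hf1x, hx, mul_one] at h1
      calc (1:ℝ) = |(1:ℝ)| := by norm_num
        _ ≤ ‖f1‖ := by rw [← hx] at h1 ⊢; rw [hx] at h1 ⊢; rwa [abs_of_nonneg zero_le_one] at h1 ⊢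
  have hxne : x ≠ 0 := by
    intro h0
    rw [h0, norm_zero] at hx
    norm_num at hx
  obtain ⟨φ, hφle, hφx, hφz⟩ := exists_support_zero hxne hxz
  have hφnorm : ‖φ‖ = 1 := by
    refine le_antisymm hφle ?_
    have h1 : |φ x| ≤ ‖φ‖ * ‖x‖ := φ.le_opNorm x
    rw [hφx, hx, mul_one, abs_of_nonneg zero_le_one] at h1
    exact h1
  obtain ⟨f, hfprop, hfuniq⟩ := hsm
  have e1 : f1 = f := hfuniq f1 ⟨hf1norm, hf1x⟩
  have e2 : φ = f := hfuniq φ ⟨hφnorm, hφx⟩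
  have hf1z0 : f1 z = 0 := by rw [e1, ← e2, hφz]
  have hf1zval : |f1 z| = ‖T z‖ := by
    rw [hf1]
    simp only [ContinuousLinearMap.comp_apply, hg, ContinuousLinearMap.smul_apply, smul_eq_mul]
    rw [hhTz, abs_mul, habs1, one_mul, abs_of_nonneg (norm_nonneg _)]
  rw [hf1z0, abs_zero] at hf1zval
  linarith
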